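/- For all infinite cardinals θ < λ, there exist a linear order I of cardinality λ and a subset J ⊆ I of cardinality θ such that for every J' ⊆ I with |J'| ≤ θ there is an order-preserving injection from J' into J. (The order-theoretic claim used in the proof of Corollary 3.11.) -/

import Mathlib

open Filter Cardinal

universe u

/-- Key lemma: for an infinite cardinal `κ`, the lexicographic order on finite lists
over a well order of type `κ.ord` embeds (in a uniform, lex-preserving way) every
pair `(ordinal < α, list)` for every ordinal `α` of cardinality at most `κ`. -/
theorem exists_lex_embedding (κ : Cardinal.{u}) (hκ : ℵ₀ ≤ κ) :
    ∀ α : Ordinal.{u}, α.card ≤ κ →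
    ∃ F : Ordinal.{u} × List κ.ord.ToType → List κ.ord.ToType,
      ∀ x y f g, x < α → y < α → (x < y ∨ (x = y ∧ f < g)) → F (x, f) < F (y, g) := by
  classical
  have hτinf : Infinite κ.ord.ToType := by
    rw [Cardinal.infinite_iff, Cardinal.mk_toType, Cardinal.card_ord]; exact hκ
  obtain ⟨e0, e1, he⟩ : ∃ a b : κ.ord.ToType, a < b := by
    obtain ⟨a, b, hab⟩ := exists_pair_ne κ.ord.ToType
    rcases hab.lt_or_gt with h | h
    exacts [⟨a, b, h⟩, ⟨b, a, h⟩]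
  intro α
  induction α using Ordinal.induction with
  | _ α IH =>
  intro hcard
  rcases Ordinal.zero_or_succ_or_isSuccLimit α with h0 | ⟨β, hβ⟩ | hlim
  · exact ⟨fun _ => [], fun x y f g hx _ _ =>
      absurd hx (by rw [h0]; exact (zero_le (a := x)).not_gt)⟩
  · subst hβ
    obtain ⟨Fβ, hFβ⟩ := IH β (Order.lt_succ β)
      ((Ordinal.card_le_card (Order.lt_succ β).le).trans hcard)
    refine ⟨fun p => if p.1 < β then e0 :: Fβ p else e1 :: p.2, ?_⟩
    intro x y f g hx hy h
    have hx' : x ≤ β := Order.lt_succ_iff.mp hx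
    have hy' : y ≤ β := Order.lt_succ_iff.mp hy
    dsimp only
    rcases h with h | ⟨rfl, hfg⟩
    · have hxβ : x < β := lt_of_lt_of_le h hy'
      by_cases hyβ : y < β
      · rw [if_pos hxβ, if_pos hyβ]
        exact List.Lex.cons (hFβ x y f g hxβ hyβ (Or.inl h))
      · rw [if_pos hxβ, if_neg hyβ]
        exact List.Lex.rel he
    · by_cases hxβ : x < β
      · rw [if_pos hxβ, if_pos hxβ]
        exact List.Lex.cons (hFβ x x f g hxβ hxβ (Or.inr ⟨rfl, hfg⟩))
      · rw [if_neg hxβ, if_neg hxβ]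
        exact List.Lex.cons hfg
  · -- limit case
    have hpos : (0 : Ordinal) < α := hlim.pos
    have hne' : Nonempty {β : Ordinal.{u} // β < α} := ⟨⟨0, hpos⟩⟩
    -- a surjection from the index well order onto the ordinals below `α`
    obtain ⟨s, hs⟩ : ∃ s : κ.ord.ToType → {β : Ordinal.{u} // β < α},
        Function.Surjective s := by
      obtain ⟨ι⟩ : Nonempty (α.ToType ↪ κ.ord.ToType) := by
        rw [← Cardinal.le_def, Cardinal.mk_toType, Cardinal.mk_toType, Cardinal.card_ord]
        exact hcard
      set g : {β : Ordinal.{u} // β < α} → κ.ord.ToType :=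
        fun b => ι ((Ordinal.ToType.mk (o := α)) ⟨b.1, b.2⟩) with hg
      have hginj : Function.Injective g := by
        intro b c hbc
        have := (Ordinal.ToType.mk (o := α)).injective (ι.injective hbc)
        exact Subtype.ext (congrArg Subtype.val this)
      exact ⟨Function.invFun g, Function.invFun_surjective hginj⟩
    have wf : WellFounded ((· < ·) : κ.ord.ToType → κ.ord.ToType → Prop) :=
      wellFounded_lt
    have hne : ∀ b : {β : Ordinal.{u} // β < α},
        {t : κ.ord.ToType | b.1 ≤ (s t).1}.Nonempty := by
      intro b
      obtain ⟨t, ht⟩ := hs b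
      exact ⟨t, by rw [Set.mem_setOf_eq, ht]⟩
    obtain ⟨idx, hidx_le, hidx_mono⟩ :
        ∃ idx : {β : Ordinal.{u} // β < α} → κ.ord.ToType,
          (∀ b, b.1 ≤ (s (idx b)).1) ∧
          (∀ b c : {β : Ordinal.{u} // β < α}, b.1 ≤ c.1 → idx b ≤ idx c) :=
      by
      refine ⟨fun b => wf.min _ (hne b), fun b => wf.min_mem _ (hne b), fun b c h => ?_⟩
      have h1 : c.1 ≤ (s (wf.min {t | c.1 ≤ (s t).1} (hne c))).1 := wf.min_mem _ (hne c)
      have h2 : wf.min {t | c.1 ≤ (s t).1} (hne c) ∈ {t | b.1 ≤ (s t).1} :=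
        le_trans h h1
      exact WellFounded.min_le wf h2
    have hsub : ∀ t : κ.ord.ToType,
        ∃ F' : Ordinal.{u} × List κ.ord.ToType → List κ.ord.ToType,
          ∀ x y f g, x < Order.succ (s t).1 → y < Order.succ (s t).1 →
            (x < y ∨ (x = y ∧ f < g)) → F' (x, f) < F' (y, g) := by
      intro t
      have h1 : Order.succ (s t).1 < α := hlim.succ_lt (s t).2
      exact IH _ h1 ((Ordinal.card_le_card h1.le).trans hcard)
    choose G hG using hsub
    refine ⟨fun p => if h : p.1 < α then idx ⟨p.1, h⟩ :: G (idx ⟨p.1, h⟩) p else [], ?_⟩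
    intro x y f g hx hy h
    dsimp only
    rw [dif_pos hx, dif_pos hy]
    have hxley : x ≤ y := by rcases h with h | ⟨rfl, _⟩; exacts [h.le, le_rfl]
    rcases lt_or_eq_of_le (hidx_mono ⟨x, hx⟩ ⟨y, hy⟩ hxley) with hlt | heq
    · exact List.Lex.rel hlt
    · rw [heq]
      refine List.Lex.cons (hG (idx ⟨y, hy⟩) x y f g ?_ ?_ h)
      · exact Order.lt_succ_iff.mpr (le_trans hxley (hidx_le ⟨y, hy⟩))
      · exact Order.lt_succ_iff.mpr (hidx_le ⟨y, hy⟩)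

/-- The order-theoretic claim used in the proof of Corollary 3.11: for all infinite
cardinals `θ < λ` there are a linear order `I` of cardinality `λ` and a subset
`J ⊆ I` of cardinality `θ` such that every `J' ⊆ I` of cardinality `≤ θ` admits an
order-preserving injection into `J`. -/
theorem exists_universal_suborder (θ lam : Cardinal.{u}) (hθ : ℵ₀ ≤ θ)
    (hlt : θ < lam) :
    ∃ (I : LinOrd.{u}) (J : Set I),
      Cardinal.mk I = lam ∧ Cardinal.mk J = θ ∧
      ∀ J' : Set I, Cardinal.mk J' ≤ θ → ∃ f : ↥J' → ↥J, StrictMono f := by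
  classical
  have hlam : ℵ₀ ≤ lam := hθ.trans hlt.le
  have hτinf : Infinite θ.ord.ToType := by
    rw [Cardinal.infinite_iff, Cardinal.mk_toType, Cardinal.card_ord]; exact hθ
  have hΛne : Nonempty lam.ord.ToType := by
    rw [← Cardinal.mk_ne_zero_iff, Cardinal.mk_toType, Cardinal.card_ord]
    exact (Cardinal.aleph0_pos.trans_le hlam).ne'
  obtain ⟨a₀⟩ := hΛne
  set L := List θ.ord.ToType with hL
  refine ⟨LinOrd.of (lam.ord.ToType ×ₗ L),
      Set.range (fun l : L => toLex ((a₀ : lam.ord.ToType), l)), ?_, ?_, ?_⟩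
  · show Cardinal.mk (lam.ord.ToType × L) = lam
    rw [Cardinal.mk_prod, Cardinal.lift_id, Cardinal.lift_id, Cardinal.mk_toType,
      Cardinal.card_ord, hL, Cardinal.mk_list_eq_mk, Cardinal.mk_toType, Cardinal.card_ord,
      Cardinal.mul_eq_max hlam hθ]
    exact max_eq_left hlt.le
  · have hinj : Function.Injective (fun l : L => toLex ((a₀ : lam.ord.ToType), l)) := by
      intro l m hlm
      exact congrArg (fun p => (ofLex p).2) hlm
    show Cardinal.mk (Set.range fun l : L => toLex ((a₀ : lam.ord.ToType), l)) = θ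
    rw [Cardinal.mk_range_eq _ hinj, hL, Cardinal.mk_list_eq_mk, Cardinal.mk_toType,
      Cardinal.card_ord]
  · intro J' hJ'
    set S : Set lam.ord.ToType := Set.range (fun x : ↥J' => (ofLex (x.1 : lam.ord.ToType ×ₗ L)).1)
      with hS
    set r : S → S → Prop := ((· < ·) : S → S → Prop) with hr
    have hcard : (Ordinal.type r).card ≤ θ := by
      rw [Ordinal.card_type]
      exact le_trans Cardinal.mk_range_le hJ'
    obtain ⟨F, hF⟩ := exists_lex_embedding θ hθ (Ordinal.type r) hcard
    have hmem : ∀ x : ↥J', (ofLex (x.1 : lam.ord.ToType ×ₗ L)).1 ∈ S := fun x => ⟨x, rfl⟩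
    refine ⟨fun x => ⟨toLex (a₀,
        F ((Ordinal.typein r).toRelEmbedding ⟨_, hmem x⟩,
           (ofLex (x.1 : lam.ord.ToType ×ₗ L)).2)), Set.mem_range_self _⟩, ?_⟩
    intro x y hxy
    have hxy' : (ofLex (x.1 : lam.ord.ToType ×ₗ L)).1 < (ofLex (y.1 : lam.ord.ToType ×ₗ L)).1 ∨
        ((ofLex (x.1 : lam.ord.ToType ×ₗ L)).1 = (ofLex (y.1 : lam.ord.ToType ×ₗ L)).1 ∧
          (ofLex (x.1 : lam.ord.ToType ×ₗ L)).2 < (ofLex (y.1 : lam.ord.ToType ×ₗ L)).2) := by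
      have h0 : (x.1 : lam.ord.ToType ×ₗ L) < (y.1 : lam.ord.ToType ×ₗ L) := hxy
      exact Prod.Lex.lt_iff.mp h0
    have hFlt : F ((Ordinal.typein r).toRelEmbedding ⟨_, hmem x⟩,
          (ofLex (x.1 : lam.ord.ToType ×ₗ L)).2) <
        F ((Ordinal.typein r).toRelEmbedding ⟨_, hmem y⟩,
          (ofLex (y.1 : lam.ord.ToType ×ₗ L)).2) := by
      apply hF _ _ _ _ (Ordinal.typein_lt_type r _) (Ordinal.typein_lt_type r _)
      rcases hxy' with h | ⟨h1, h2⟩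
      · exact Or.inl ((Ordinal.typein_lt_typein r).mpr h)
      · have : (⟨_, hmem x⟩ : S) = ⟨_, hmem y⟩ := Subtype.ext h1
        exact Or.inr ⟨by rw [this], h2⟩
    refine Subtype.coe_lt_coe.mp ?_
    exact Prod.Lex.lt_iff.mpr (Or.inr ⟨rfl, hFlt⟩)
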